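/- In the constraint graph C_G, the subgraph induced on V_X is a disjoint union of paths (every vertex has degree at most 2 within V_X, and there is no cycle within V_X), and likewise for V_Y; moreover the edges between V_X and V_Y form a matching. -/

import Mathlib

open Finset

variable {m : ℕ}

/-- First endpoint of the `e`-th edge of the Hamiltonian path induced by `π`. -/
def pFst (π : Equiv.Perm (Fin (m+1))) (e : Fin m) : Fin (m+1) := π e.castSucc

/-- Second endpoint of the `e`-th edge of the Hamiltonian path induced by `π`. -/
def pSnd (π : Equiv.Perm (Fin (m+1))) (e : Fin m) : Fin (m+1) := π e.succ

/-- Position of vertex `v` along the Hamiltonian path induced by `π`. -/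
def pos (π : Equiv.Perm (Fin (m+1))) (v : Fin (m+1)) : ℕ := (π.symm v : ℕ)

/-- Edges `e` and `f = e+1` of `P_x` form a switch pair: both `P_x`-neighbours of the
middle internal vertex `πx e.succ` lie on the same side of it in `π_y`. -/
def SwitchPairX (πx πy : Equiv.Perm (Fin (m+1))) (e f : Fin m) : Prop :=
  (e : ℕ) + 1 = (f : ℕ) ∧
    ((pos πy (pFst πx e) < pos πy (pSnd πx e) ∧ pos πy (pSnd πx f) < pos πy (pSnd πx e)) ∨
     (pos πy (pSnd πx e) < pos πy (pFst πx e) ∧ pos πy (pSnd πx e) < pos πy (pSnd πx f)))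

/-- Switch pairs of `P_y`: the same with the roles of the permutations swapped. -/
def SwitchPairY (πx πy : Equiv.Perm (Fin (m+1))) (e f : Fin m) : Prop :=
  SwitchPairX πy πx e f

/-- The `P_x`-edge `e` and the `P_y`-edge `f` have the same (unordered) pair of endpoints. -/
def SharedEdge (πx πy : Equiv.Perm (Fin (m+1))) (e f : Fin m) : Prop :=
  (pFst πx e = pFst πy f ∧ pSnd πx e = pSnd πy f) ∨
  (pFst πx e = pSnd πy f ∧ pSnd πx e = pFst πy f)

/-- Alignment of the `P_x`-edge `e`: positive (`True`) iff its endpoints appear in the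
same relative order in `π_x` and `π_y`. -/
def AlignX (πx πy : Equiv.Perm (Fin (m+1))) (e : Fin m) : Prop :=
  pos πy (pFst πx e) < pos πy (pSnd πx e)

/-- Alignment of the `P_y`-edge `e`. -/
def AlignY (πx πy : Equiv.Perm (Fin (m+1))) (e : Fin m) : Prop :=
  pos πx (pFst πy e) < pos πx (pSnd πy e)


/-- The subgraph of the constraint graph induced on `V_X`: switch-pair adjacency
between edges of `P_x`. -/
def GX (πx πy : Equiv.Perm (Fin (m+1))) : SimpleGraph (Fin m) where
  Adj e f := SwitchPairX πx πy e f ∨ SwitchPairX πx πy f e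
  symm := ⟨by rintro e f h; tauto⟩
  loopless := ⟨by rintro e (⟨h, -⟩ | ⟨h, -⟩) <;> omega⟩

/-- The subgraph of the constraint graph induced on `V_Y`. -/
def GY (πx πy : Equiv.Perm (Fin (m+1))) : SimpleGraph (Fin m) where
  Adj e f := SwitchPairY πx πy e f ∨ SwitchPairY πx πy f e
  symm := ⟨by rintro e f h; tauto⟩
  loopless := ⟨by rintro e (⟨h, -⟩ | ⟨h, -⟩) <;> omega⟩

open SimpleGraph


lemma no_cross {m : ℕ} {G : SimpleGraph (Fin m)}
    (h : ∀ e f, G.Adj e f → (e : ℕ) + 1 = f ∨ (f : ℕ) + 1 = e)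
    {v w : Fin m} (hvw : (v : ℕ) + 1 = (w : ℕ)) :
    ∀ {a b : Fin m} (p : (G \ SimpleGraph.fromEdgeSet {s(v,w)}).Walk a b),
      (a : ℕ) ≤ (v : ℕ) → (v : ℕ) < (b : ℕ) → False := by
  intro a b p
  induction p with
  | nil => intro h1 h2; omega
  | @cons a c b hadj p ih =>
    intro h1 h2
    obtain ⟨hG, hne⟩ := hadj
    by_cases hc : (c : ℕ) ≤ (v : ℕ)
    · exact ih hc h2
    · push_neg at hc
      rcases h a c hG with hs | hs
      · have hav : a = v := Fin.ext (by omega)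
        have hcw : c = w := Fin.ext (by omega)
        subst hav; subst hcw
        exact hne (by simp [SimpleGraph.fromEdgeSet_adj]; omega)
      · omega

lemma acyclic_of_succ {m : ℕ} {G : SimpleGraph (Fin m)}
    (h : ∀ e f, G.Adj e f → (e : ℕ) + 1 = f ∨ (f : ℕ) + 1 = e) : G.IsAcyclic := by
  rw [isAcyclic_iff_forall_adj_isBridge]
  intro v w hvw
  rw [isBridge_iff]
  intro hr
  rcases h v w hvw with hs | hs
  · obtain ⟨p⟩ := hr
    exact no_cross h hs p (le_refl _) (by omega)
  · obtain ⟨p⟩ := hr.symm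
    have : s(w, v) = s(v, w) := Sym2.eq_swap
    rw [← this] at p
    exact no_cross h hs p (le_refl _) (by omega)

lemma deg_le_two {m : ℕ} {G : SimpleGraph (Fin m)}
    (h : ∀ e f, G.Adj e f → (e : ℕ) + 1 = f ∨ (f : ℕ) + 1 = e) (e : Fin m) :
    {f | G.Adj e f}.ncard ≤ 2 := by
  have hsub : (Fin.val '' {f | G.Adj e f}) ⊆ ({(e : ℕ) + 1, (e : ℕ) - 1} : Set ℕ) := by
    rintro n ⟨f, hf, rfl⟩
    simp only [Set.mem_insert_iff, Set.mem_singleton_iff]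
    rcases h e f hf with hs | hs
    · left; omega
    · right; omega
  calc {f | G.Adj e f}.ncard = (Fin.val '' {f | G.Adj e f}).ncard :=
        (Set.ncard_image_of_injective _ Fin.val_injective).symm
    _ ≤ ({(e : ℕ) + 1, (e : ℕ) - 1} : Set ℕ).ncard := Set.ncard_le_ncard hsub (Set.toFinite _)
    _ ≤ 2 := (Set.ncard_insert_le _ _).trans (by simp)


/-- inside `V_X` the constraint graph is a disjoint union of paths
(max degree 2 and acyclic), likewise inside `V_Y`, and the shared-edge edges
between `V_X` and `V_Y` form a matching. -/
theorem constraintGraph_structure {m : ℕ} (πx πy : Equiv.Perm (Fin (m+1))) :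
    (∀ e : Fin m, {f | (GX πx πy).Adj e f}.ncard ≤ 2) ∧ (GX πx πy).IsAcyclic ∧
    (∀ e : Fin m, {f | (GY πx πy).Adj e f}.ncard ≤ 2) ∧ (GY πx πy).IsAcyclic ∧
    (∀ e f f' : Fin m, SharedEdge πx πy e f → SharedEdge πx πy e f' → f = f') ∧
    (∀ e e' f : Fin m, SharedEdge πx πy e f → SharedEdge πx πy e' f → e = e') := by
  have hX : ∀ e f, (GX πx πy).Adj e f → (e : ℕ) + 1 = f ∨ (f : ℕ) + 1 = e := by
    rintro e f (⟨h1, -⟩ | ⟨h1, -⟩) <;> omega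
  have hY : ∀ e f, (GY πx πy).Adj e f → (e : ℕ) + 1 = f ∨ (f : ℕ) + 1 = e := by
    rintro e f (⟨h1, -⟩ | ⟨h1, -⟩) <;> omega
  refine ⟨deg_le_two hX, acyclic_of_succ hX, deg_le_two hY, acyclic_of_succ hY, ?_, ?_⟩
  · intro e f f' h1 h2
    unfold SharedEdge pFst pSnd at h1 h2
    apply Fin.ext
    rcases h1 with ⟨a1, a2⟩ | ⟨a1, a2⟩ <;> rcases h2 with ⟨b1, b2⟩ | ⟨b1, b2⟩ <;>
    first
    | (have c1 := congrArg Fin.val (πy.injective (a1.symm.trans b1))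
       have c2 := congrArg Fin.val (πy.injective (a2.symm.trans b2))
       simp only [Fin.coe_castSucc, Fin.val_succ] at c1 c2
       omega)
    | (have c1 := congrArg Fin.val (πy.injective (a1.symm.trans b2))
       have c2 := congrArg Fin.val (πy.injective (a2.symm.trans b1))
       simp only [Fin.coe_castSucc, Fin.val_succ] at c1 c2
       omega)
  · intro e e' f h1 h2
    unfold SharedEdge pFst pSnd at h1 h2
    apply Fin.ext
    rcases h1 with ⟨a1, a2⟩ | ⟨a1, a2⟩ <;> rcases h2 with ⟨b1, b2⟩ | ⟨b1, b2⟩ <;>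
    first
    | (have c1 := congrArg Fin.val (πx.injective (a1.trans b1.symm))
       have c2 := congrArg Fin.val (πx.injective (a2.trans b2.symm))
       simp only [Fin.coe_castSucc, Fin.val_succ] at c1 c2
       omega)
    | (have c1 := congrArg Fin.val (πx.injective (a1.trans b2.symm))
       have c2 := congrArg Fin.val (πx.injective (a2.trans b1.symm))
       simp only [Fin.coe_castSucc, Fin.val_succ] at c1 c2
       omega)
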